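/- The map Φ defined by Φ(x) = t^{−1} x t for x ∈ H₁ and Φ(x) = x for x ∈ H₂ extends to a well-defined group homomorphism Φ : G → G′, and this homomorphism is injective; hence the amalgamated free product G embeds into the HNN-extension G′. -/

import Mathlib

/-!
Multiple HNN-extension `G = ⟨H, t₁, …, tₙ | tᵢ⁻¹ a tᵢ = φᵢ(a) (a ∈ Aᵢ)⟩`, presented
as a `PresentedGroup` on the alphabet `H ⊕ ι`.
-/

/-- Relators of the multiple HNN-extension presentation. -/
def hnnRels {H : Type*} [Group H] {ι : Type*} (A B : ι → Subgroup H)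
    (φ : ∀ i, A i ≃* B i) : Set (FreeGroup (H ⊕ ι)) :=
  {r | ∃ h₁ h₂ : H, r = FreeGroup.of (Sum.inl h₁) * FreeGroup.of (Sum.inl h₂) *
        (FreeGroup.of (Sum.inl (h₁ * h₂)))⁻¹} ∪
  {r | ∃ (i : ι) (a : A i), r = (FreeGroup.of (Sum.inr i))⁻¹ *
        FreeGroup.of (Sum.inl (a : H)) * FreeGroup.of (Sum.inr i) *
        (FreeGroup.of (Sum.inl ((φ i a : B i) : H)))⁻¹}

/-- The multiple HNN-extension of `H`. -/
abbrev MHNN {H : Type*} [Group H] {ι : Type*} (A B : ι → Subgroup H)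
    (φ : ∀ i, A i ≃* B i) :=
  PresentedGroup (hnnRels A B φ)

/-- Canonical generators: `Sum.inl h` for `h ∈ H`, `Sum.inr i` for the stable letter `tᵢ`. -/
def gen {H : Type*} [Group H] {ι : Type*} (A B : ι → Subgroup H)
    (φ : ∀ i, A i ≃* B i) (x : H ⊕ ι) : MHNN A B φ :=
  PresentedGroup.of x

/-- The element represented by the word `u₀ t_{idx 0}^{e 0} u₁ ⋯ t_{idx (ℓ-1)}^{e (ℓ-1)} u_ℓ`. -/
def wordProd {H : Type*} [Group H] {ι : Type*} (A B : ι → Subgroup H)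
    (φ : ∀ i, A i ≃* B i) (ℓ : ℕ) (u : ℕ → H) (idx : ℕ → ι) (e : ℕ → ℤ) :
    MHNN A B φ :=
  gen A B φ (Sum.inl (u 0)) *
    ((List.range ℓ).map fun k =>
      gen A B φ (Sum.inr (idx k)) ^ e k * gen A B φ (Sum.inl (u (k + 1)))).prod

/-- `side A B i e` is `A i (e)`, i.e. `A i` if `e = 1` and `B i` if `e = -1`. -/
def side {H : Type*} [Group H] {ι : Type*} (A B : ι → Subgroup H) (i : ι) (e : ℤ) :
    Subgroup H :=
  if e = 1 then A i else B i

/-- The word is reduced: exponents are `±1`, no factor `tᵢ^{-α} w tᵢ^{α}` with `w ∈ A i (α)`. -/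
def ReducedWord {H : Type*} [Group H] {ι : Type*} (A B : ι → Subgroup H)
    (ℓ : ℕ) (u : ℕ → H) (idx : ℕ → ι) (e : ℕ → ℤ) : Prop :=
  (∀ k < ℓ, e k = 1 ∨ e k = -1) ∧
  ∀ k, k + 1 < ℓ → idx k = idx (k + 1) → e k = -e (k + 1) →
    u (k + 1) ∉ side A B (idx k) (e (k + 1))


section AuxHNN

variable {H : Type*} [Group H] {ι : Type*} (A B : ι → Subgroup H) (ψ : ∀ i, A i ≃* B i)

lemma gen_eq_mk' (x : H ⊕ ι) :
    gen A B ψ x = QuotientGroup.mk' (Subgroup.normalClosure (hnnRels A B ψ)) (FreeGroup.of x) :=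
  rfl

lemma gen_mul (h₁ h₂ : H) :
    gen A B ψ (Sum.inl h₁) * gen A B ψ (Sum.inl h₂) = gen A B ψ (Sum.inl (h₁ * h₂)) := by
  have hmem : (FreeGroup.of (Sum.inl h₁) * FreeGroup.of (Sum.inl h₂) *
      (FreeGroup.of (Sum.inl (h₁ * h₂)) : FreeGroup (H ⊕ ι))⁻¹) ∈
      Subgroup.normalClosure (hnnRels A B ψ) :=
    Subgroup.subset_normalClosure (Or.inl ⟨h₁, h₂, rfl⟩)
  have h1 : (QuotientGroup.mk' (Subgroup.normalClosure (hnnRels A B ψ)))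
      (FreeGroup.of (Sum.inl h₁) * FreeGroup.of (Sum.inl h₂) *
        (FreeGroup.of (Sum.inl (h₁ * h₂)))⁻¹) = 1 :=
    (QuotientGroup.eq_one_iff _).mpr hmem
  simp only [map_mul, map_inv, mul_inv_eq_one] at h1
  exact h1

lemma gen_t (i : ι) (a : A i) :
    (gen A B ψ (Sum.inr i))⁻¹ * gen A B ψ (Sum.inl (a : H)) * gen A B ψ (Sum.inr i) =
      gen A B ψ (Sum.inl ((ψ i a : B i) : H)) := by
  have hmem : ((FreeGroup.of (Sum.inr i))⁻¹ * FreeGroup.of (Sum.inl (a : H)) *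
      FreeGroup.of (Sum.inr i) *
      (FreeGroup.of (Sum.inl ((ψ i a : B i) : H)) : FreeGroup (H ⊕ ι))⁻¹) ∈
      Subgroup.normalClosure (hnnRels A B ψ) :=
    Subgroup.subset_normalClosure (Or.inr ⟨i, a, rfl⟩)
  have h1 : (QuotientGroup.mk' (Subgroup.normalClosure (hnnRels A B ψ)))
      ((FreeGroup.of (Sum.inr i))⁻¹ * FreeGroup.of (Sum.inl (a : H)) *
        FreeGroup.of (Sum.inr i) * (FreeGroup.of (Sum.inl ((ψ i a : B i) : H)))⁻¹) = 1 :=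
    (QuotientGroup.eq_one_iff _).mpr hmem
  simp only [map_mul, map_inv, mul_inv_eq_one] at h1
  exact h1

/-- `h ↦ gen (Sum.inl h)` as a monoid hom. -/
def ofH : H →* MHNN A B ψ :=
  MonoidHom.mk' (fun h => gen A B ψ (Sum.inl h)) fun a b => (gen_mul A B ψ a b).symm

@[simp] lemma ofH_apply (h : H) : ofH A B ψ h = gen A B ψ (Sum.inl h) := rfl

end AuxHNN

section

variable (H₁ H₂ : Type*) [Group H₁] [Group H₂] (A₁ : Subgroup H₁) (A₂ : Subgroup H₂)
  (φ : A₁ ≃* A₂)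

/-- The relators `a φ(a)⁻¹` (`a ∈ A₁`) of the amalgamated free product inside the free
product `H₁ ∗ H₂`. -/
def amalRels : Set (Monoid.Coprod H₁ H₂) :=
  {r | ∃ a : A₁, r = Monoid.Coprod.inl (a : H₁) * (Monoid.Coprod.inr ((φ a : A₂) : H₂))⁻¹}

/-- The amalgamated free product `G = ⟨H₁ ∗ H₂ | a = φ(a) (a ∈ A₁)⟩`, i.e. the quotient of
the free product `H₁ ∗ H₂` by the normal closure of `{a φ(a)⁻¹ | a ∈ A₁}`. -/
abbrev AmalProd := Monoid.Coprod H₁ H₂ ⧸ Subgroup.normalClosure (amalRels H₁ H₂ A₁ A₂ φ)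

/-- The map `Φ` with `Φ(x) = t⁻¹ x t` for `x ∈ H₁` and `Φ(x) = x` for
`x ∈ H₂` extends to a well-defined group homomorphism from the amalgamated free product
`G` to the HNN-extension `G′ = ⟨H₁ ∗ H₂, t | t⁻¹ a t = φ(a) (a ∈ A₁)⟩` (with associated
subgroups the copies of `A₁` and `A₂` inside `H₁ ∗ H₂`, and associated isomorphism `φ′`
induced by `φ`), and this homomorphism is injective; hence `G` embeds into `G′`. -/
theorem amal_embeds_hnn
    (φ' : Subgroup.map (Monoid.Coprod.inl : H₁ →* Monoid.Coprod H₁ H₂) A₁ ≃*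
          Subgroup.map (Monoid.Coprod.inr : H₂ →* Monoid.Coprod H₁ H₂) A₂)
    (hφ' : ∀ a : A₁,
      ((φ' ⟨Monoid.Coprod.inl (a : H₁),
            Subgroup.mem_map_of_mem _ a.2⟩ :
          Subgroup.map (Monoid.Coprod.inr : H₂ →* Monoid.Coprod H₁ H₂) A₂) :
          Monoid.Coprod H₁ H₂) =
        Monoid.Coprod.inr ((φ a : A₂) : H₂)) :
    ∃ Φ : AmalProd H₁ H₂ A₁ A₂ φ →*
        MHNN (fun _ : Unit => Subgroup.map (Monoid.Coprod.inl : H₁ →* Monoid.Coprod H₁ H₂) A₁)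
          (fun _ : Unit => Subgroup.map (Monoid.Coprod.inr : H₂ →* Monoid.Coprod H₁ H₂) A₂)
          (fun _ : Unit => φ'),
      (∀ x : H₁,
        Φ (QuotientGroup.mk' (Subgroup.normalClosure (amalRels H₁ H₂ A₁ A₂ φ))
            (Monoid.Coprod.inl x)) =
          (gen _ _ _ (Sum.inr ()))⁻¹ * gen _ _ _ (Sum.inl (Monoid.Coprod.inl x)) *
            gen _ _ _ (Sum.inr ())) ∧
      (∀ x : H₂,
        Φ (QuotientGroup.mk' (Subgroup.normalClosure (amalRels H₁ H₂ A₁ A₂ φ))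
            (Monoid.Coprod.inr x)) =
          gen _ _ _ (Sum.inl (Monoid.Coprod.inr x))) ∧
      Function.Injective Φ := by
  classical
  set N := Subgroup.normalClosure (amalRels H₁ H₂ A₁ A₂ φ) with hN
  set Am : (ι : Unit) → Subgroup (Monoid.Coprod H₁ H₂) :=
    fun _ => Subgroup.map (Monoid.Coprod.inl : H₁ →* Monoid.Coprod H₁ H₂) A₁ with hAm
  set Bm : (ι : Unit) → Subgroup (Monoid.Coprod H₁ H₂) :=
    fun _ => Subgroup.map (Monoid.Coprod.inr : H₂ →* Monoid.Coprod H₁ H₂) A₂ with hBm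
  set ψ : ∀ _ : Unit, Am () ≃* Bm () := fun _ => φ' with hψ
  set T : MHNN Am Bm ψ := gen Am Bm ψ (Sum.inr ()) with hT
  -- the key relation in the HNN extension
  have key : ∀ a : A₁,
      T⁻¹ * gen Am Bm ψ (Sum.inl (Monoid.Coprod.inl (a : H₁))) * T =
        gen Am Bm ψ (Sum.inl (Monoid.Coprod.inr ((φ a : A₂) : H₂))) := by
    intro a
    have h := gen_t Am Bm ψ ()
      ⟨Monoid.Coprod.inl (a : H₁), Subgroup.mem_map_of_mem _ a.2⟩
    rw [hφ' a] at h
    exact h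
  -- the homomorphism on the free product
  let f₁ : H₁ →* MHNN Am Bm ψ :=
    MonoidHom.mk' (fun x => T⁻¹ * gen Am Bm ψ (Sum.inl (Monoid.Coprod.inl x)) * T)
      (by
        intro a b
        rw [map_mul, ← gen_mul Am Bm ψ]
        group)
  let f₂ : H₂ →* MHNN Am Bm ψ :=
    MonoidHom.mk' (fun x => gen Am Bm ψ (Sum.inl (Monoid.Coprod.inr x)))
      (by
        intro a b
        rw [map_mul, ← gen_mul Am Bm ψ])
  let f : Monoid.Coprod H₁ H₂ →* MHNN Am Bm ψ := Monoid.Coprod.lift f₁ f₂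
  have hf_inl : ∀ x : H₁,
      f (Monoid.Coprod.inl x) = T⁻¹ * gen Am Bm ψ (Sum.inl (Monoid.Coprod.inl x)) * T := by
    intro x; simp [f, Monoid.Coprod.lift_apply_inl, f₁]
  have hf_inr : ∀ x : H₂,
      f (Monoid.Coprod.inr x) = gen Am Bm ψ (Sum.inl (Monoid.Coprod.inr x)) := by
    intro x; simp [f, Monoid.Coprod.lift_apply_inr, f₂]
  -- f kills the relators
  have hsub : amalRels H₁ H₂ A₁ A₂ φ ⊆ (f.ker : Set (Monoid.Coprod H₁ H₂)) := by
    rintro r ⟨a, rfl⟩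
    have : f (Monoid.Coprod.inl (a : H₁) * (Monoid.Coprod.inr ((φ a : A₂) : H₂))⁻¹) = 1 := by
      rw [map_mul, map_inv, hf_inl, hf_inr, key a, mul_inv_cancel]
    exact this
  have hker : ∀ x ∈ N, f x = 1 := fun x hx =>
    (Subgroup.normalClosure_le_normal hsub) hx
  -- the induced map on the amalgamated product
  let Φ : AmalProd H₁ H₂ A₁ A₂ φ →* MHNN Am Bm ψ := QuotientGroup.lift N f hker
  have hΦ : ∀ w : Monoid.Coprod H₁ H₂, Φ (QuotientGroup.mk' N w) = f w := fun w => rfl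
  -- the retraction Ψ : MHNN → AmalProd, sending h ↦ [h] and t ↦ 1
  have hrels : ∀ r ∈ hnnRels Am Bm ψ,
      FreeGroup.lift (Sum.elim (fun h => (QuotientGroup.mk' N) h) (fun _ : Unit => 1)) r = 1 := by
    rintro r (⟨h₁, h₂, rfl⟩ | ⟨i, a, rfl⟩)
    · simp only [map_mul, map_inv, FreeGroup.lift_apply_of, Sum.elim_inl]
      group
    · simp only [map_mul, map_inv, FreeGroup.lift_apply_of, Sum.elim_inl, Sum.elim_inr]
      obtain ⟨a₀, ha₀, hval⟩ := a.2
      have ha : a = ⟨Monoid.Coprod.inl (((⟨a₀, ha₀⟩ : A₁) : H₁)),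
          Subgroup.mem_map_of_mem _ (⟨a₀, ha₀⟩ : A₁).2⟩ := Subtype.ext hval.symm
      have hcoe : ((ψ i a : Bm ()) : Monoid.Coprod H₁ H₂) =
          Monoid.Coprod.inr ((φ ⟨a₀, ha₀⟩ : A₂) : H₂) := by
        rw [ha]; exact hφ' ⟨a₀, ha₀⟩
      have hrel : (Monoid.Coprod.inl (((⟨a₀, ha₀⟩ : A₁) : H₁)) *
          (Monoid.Coprod.inr ((φ ⟨a₀, ha₀⟩ : A₂) : H₂))⁻¹) ∈ N :=
        Subgroup.subset_normalClosure ⟨⟨a₀, ha₀⟩, rfl⟩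
      have h1 : (QuotientGroup.mk' N) (Monoid.Coprod.inl (((⟨a₀, ha₀⟩ : A₁) : H₁))) =
          (QuotientGroup.mk' N) (Monoid.Coprod.inr ((φ ⟨a₀, ha₀⟩ : A₂) : H₂)) := by
        have h2 := (QuotientGroup.eq_one_iff _).mpr hrel
        rw [QuotientGroup.mk_mul, QuotientGroup.mk_inv, mul_inv_eq_one] at h2
        simpa using h2
      have hav : (a : Monoid.Coprod H₁ H₂) = Monoid.Coprod.inl a₀ := hval.symm
      rw [hcoe, hav]
      rw [show (Monoid.Coprod.inl a₀ : Monoid.Coprod H₁ H₂) =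
          Monoid.Coprod.inl (((⟨a₀, ha₀⟩ : A₁) : H₁)) from rfl, h1]
      group
  let Ψ : MHNN Am Bm ψ →* AmalProd H₁ H₂ A₁ A₂ φ := PresentedGroup.toGroup hrels
  have hΨgen : ∀ x, Ψ (gen Am Bm ψ x) =
      Sum.elim (fun h => (QuotientGroup.mk' N) h) (fun _ : Unit => 1) x := fun x =>
    PresentedGroup.toGroup.of hrels
  -- Ψ ∘ Φ = id
  have hleft : Function.LeftInverse Ψ Φ := by
    intro x
    refine QuotientGroup.induction_on x ?_
    intro w
    have : Ψ (f w) = QuotientGroup.mk' N w := by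
      have hcomp : Ψ.comp f = QuotientGroup.mk' N := by
        refine Monoid.Coprod.hom_ext ?_ ?_
        · ext x
          simp only [MonoidHom.comp_apply, hf_inl]
          rw [map_mul, map_mul, map_inv, hT]
          simp only [hΨgen, Sum.elim_inl, Sum.elim_inr]
          simp
        · ext x
          simp only [MonoidHom.comp_apply, hf_inr]
          rw [hΨgen]
          simp
      exact DFunLike.congr_fun hcomp w
    exact this
  refine ⟨Φ, ?_, ?_, hleft.injective⟩
  · intro x
    rw [hΦ, hf_inl]
  · intro x
    rw [hΦ, hf_inr]

end
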